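/- arXiv:1710.09026 — 2 statements merged into one kernel-verified Lean document; each statement's English description precedes it below -/
import Mathlib

section
/- Let W be an m × n real matrix with singular value decomposition W = Ũ Σ Ṽᵀ, where Ũ is m × min(m,n) with orthonormal columns, Ṽ is n × min(m,n) with orthonormal columns, and Σ is the min(m,n) × min(m,n) diagonal matrix of singular values. Then for U = Ũ·√Σ and V = √Σ·Ṽᵀ (where √Σ is the entrywise square root of the diagonal matrix Σ) one has W = U·V and (1/2)(‖U‖_F² + ‖V‖_F²) = ‖W‖_T. -/
open Matrix BigOperators

/-- The Frobenius norm of a real matrix. -/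
noncomputable def frobeniusNorm {m n : ℕ} (A : Matrix (Fin m) (Fin n) ℝ) : ℝ :=
  Real.sqrt (∑ i, ∑ j, (A i j) ^ 2)

/-- The full list of `n` singular values of an `m × n` real matrix `W`, namely the
nonnegative square roots of the eigenvalues of `Wᵀ * W`. (At most `min m n` of these
are nonzero.) -/
noncomputable def singularValuesFull {m n : ℕ} (W : Matrix (Fin m) (Fin n) ℝ) :
    Fin n → ℝ :=
  fun i => Real.sqrt ((show (Wᵀ * W).IsHermitian by
    simpa [Matrix.conjTranspose_eq_transpose_of_trivial] using
      Matrix.isHermitian_conjTranspose_mul_self W).eigenvalues i)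

/-- The trace norm (nuclear norm) of a real matrix: the sum of its singular values. -/
noncomputable def traceNorm {m n : ℕ} (W : Matrix (Fin m) (Fin n) ℝ) : ℝ :=
  ∑ i, singularValuesFull W i

/-- `σ : Fin (min m n) → ℝ` is "the vector of singular values" of `W` when its entries
are nonnegative and, after padding with `n - min m n` zeros, it agrees (as a multiset)
with the nonnegative square roots of the eigenvalues of `Wᵀ * W`. -/
def IsSingularValueVector {m n : ℕ} (W : Matrix (Fin m) (Fin n) ℝ)
    (σ : Fin (min m n) → ℝ) : Prop :=
  (∀ i, 0 ≤ σ i) ∧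
    Multiset.map σ Finset.univ.val + Multiset.replicate (n - min m n) 0
      = Multiset.map (singularValuesFull W) Finset.univ.val

lemma frob_sq {m n : ℕ} (A : Matrix (Fin m) (Fin n) ℝ) :
    frobeniusNorm A ^ 2 = (Aᵀ * A).trace := by
  have h : frobeniusNorm A ^ 2 = ∑ i, ∑ j, (A i j) ^ 2 := by
    apply Real.sq_sqrt
    positivity
  rw [h, Matrix.trace, Finset.sum_comm]
  simp [Matrix.diag, Matrix.mul_apply, sq]

theorem svd_factorization_attains_trace_norm {m n : ℕ} (W : Matrix (Fin m) (Fin n) ℝ)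
    (σ : Fin (min m n) → ℝ) (hσ : IsSingularValueVector W σ)
    (Ut : Matrix (Fin m) (Fin (min m n)) ℝ) (Vt : Matrix (Fin n) (Fin (min m n)) ℝ)
    (hUt : Utᵀ * Ut = 1) (hVt : Vtᵀ * Vt = 1)
    (hW : W = Ut * Matrix.diagonal σ * Vtᵀ) :
    W = (Ut * Matrix.diagonal fun i => Real.sqrt (σ i)) *
          ((Matrix.diagonal fun i => Real.sqrt (σ i)) * Vtᵀ) ∧
      (1 / 2) * (frobeniusNorm (Ut * Matrix.diagonal fun i => Real.sqrt (σ i)) ^ 2 +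
          frobeniusNorm ((Matrix.diagonal fun i => Real.sqrt (σ i)) * Vtᵀ) ^ 2)
        = traceNorm W := by
  set D : Matrix (Fin (min m n)) (Fin (min m n)) ℝ :=
    Matrix.diagonal fun i => Real.sqrt (σ i) with hD
  have hDD : D * D = Matrix.diagonal σ := by
    rw [hD, Matrix.diagonal_mul_diagonal]
    have : (fun i => Real.sqrt (σ i) * Real.sqrt (σ i)) = σ :=
      funext fun i => Real.mul_self_sqrt (hσ.1 i)
    rw [this]
  have hDT : Dᵀ = D := Matrix.diagonal_transpose _
  have hsum : ∑ i, σ i = traceNorm W := by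
    have := congrArg Multiset.sum hσ.2
    simpa [Finset.sum, Multiset.sum_replicate, traceNorm] using this
  constructor
  · rw [hW, ← hDD]
    simp only [Matrix.mul_assoc]
  · rw [frob_sq, frob_sq, Matrix.transpose_mul, Matrix.transpose_mul, hDT,
      Matrix.transpose_transpose]
    have h1 : D * Utᵀ * (Ut * D) = Matrix.diagonal σ := by
      rw [Matrix.mul_assoc, ← Matrix.mul_assoc Utᵀ, hUt, Matrix.one_mul, hDD]
    have h2 : (Vt * D * (D * Vtᵀ)).trace = (Matrix.diagonal σ).trace := by
      rw [Matrix.trace_mul_comm, Matrix.mul_assoc, ← Matrix.mul_assoc Vtᵀ, hVt,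
        Matrix.one_mul, hDD]
    rw [h1, h2, Matrix.trace_diagonal, hsum]
    ring
end

section
/- Let ℓ : ℝ^{m×n} → ℝ be any function that is bounded below, and let λ ≥ 0. Then the infimum over all pairs (U, V), with U an m × min(m,n) matrix and V a min(m,n) × n matrix, of ℓ(U·V) + (λ/2)(‖U‖_F² + ‖V‖_F²) equals the infimum over all m × n matrices W of ℓ(W) + λ‖W‖_T. -/
open Matrix BigOperators

namespace SVDAux

variable {m n : ℕ} (W : Matrix (Fin m) (Fin n) ℝ)

lemma isHerm_tmul : (Wᵀ * W).IsHermitian := by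
  simpa [Matrix.conjTranspose_eq_transpose_of_trivial] using
    Matrix.isHermitian_conjTranspose_mul_self W

noncomputable def ev (i : Fin n) : ℝ := (isHerm_tmul W).eigenvalues i

noncomputable def evec (i : Fin n) : Fin n → ℝ :=
  ⇑((isHerm_tmul W).eigenvectorBasis i)

lemma ev_nonneg (i : Fin n) : 0 ≤ ev W i :=
  Matrix.eigenvalues_conjTranspose_mul_self_nonneg W i

lemma conjT_eq : Wᴴ = Wᵀ := by ext a b; simp [Matrix.conjTranspose_apply]

lemma evec_orth (i j : Fin n) : evec W i ⬝ᵥ evec W j = if i = j then 1 else 0 := by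
  have h := (isHerm_tmul W).eigenvectorBasis.orthonormal
  rw [orthonormal_iff_ite] at h
  have h2 := h i j
  simpa [PiLp.inner_apply, RCLike.inner_apply, dotProduct, evec, mul_comm] using h2

lemma mulVec_evec (i : Fin n) : (Wᴴ * W) *ᵥ evec W i = ev W i • evec W i := by
  simpa [evec, ev] using (isHerm_tmul W).mulVec_eigenvectorBasis i

lemma Wevec_dot (i j : Fin n) :
    (W *ᵥ evec W i) ⬝ᵥ (W *ᵥ evec W j) = if i = j then ev W i else 0 := by
  have h1 : (W *ᵥ evec W i) ⬝ᵥ (W *ᵥ evec W j)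
      = ((Wᴴ * W) *ᵥ evec W i) ⬝ᵥ evec W j := by
    rw [Matrix.dotProduct_mulVec, ← Matrix.mulVec_transpose, Matrix.mulVec_mulVec, ← conjT_eq]
  rw [h1, mulVec_evec, smul_dotProduct, evec_orth, smul_eq_mul]
  by_cases h : i = j <;> simp [h]





lemma evec_complete (b c : Fin n) :
    ∑ i, evec W i b * evec W i c = if b = c then 1 else 0 := by
  classical
  set hH := isHerm_tmul W with hHdef
  have hu := (Matrix.mem_unitaryGroup_iff).mp (hH.eigenvectorUnitary).2
  have h2 := congrFun (congrFun hu b) c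
  simpa [Matrix.mul_apply, Matrix.star_apply, Matrix.one_apply, evec,
    Matrix.IsHermitian.eigenvectorUnitary_apply] using h2

lemma parseval (v : Fin n → ℝ) : ∑ i, (v ⬝ᵥ evec W i) ^ 2 = v ⬝ᵥ v := by
  classical
  simp only [dotProduct, sq, Finset.sum_mul_sum]
  rw [Finset.sum_comm]
  have : ∀ b, ∑ i, ∑ c, (v b * evec W i b) * (v c * evec W i c)
      = ∑ c, v b * v c * ∑ i, evec W i b * evec W i c := by
    intro b
    rw [Finset.sum_comm]
    congr 1; ext c
    rw [Finset.mul_sum]; congr 1; ext i; ring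
  rw [Finset.sum_congr rfl fun b _ => this b]
  simp [evec_complete, mul_ite, Finset.sum_ite_eq, sq]





-- p_i = 0 when eigenvalue is 0
lemma Wevec_eq_zero {i : Fin n} (h : ev W i = 0) : W *ᵥ evec W i = 0 := by
  have := Wevec_dot W i i
  simp [h] at this
  exact this

lemma sum_pq (a : Fin m) (b : Fin n) :
    ∑ i, (W *ᵥ evec W i) a * evec W i b = W a b := by
  classical
  simp only [Matrix.mulVec, dotProduct, Finset.sum_mul]
  rw [Finset.sum_comm]
  have : ∀ c, ∑ i, W a c * evec W i c * evec W i b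
      = W a c * ∑ i, evec W i c * evec W i b := by
    intro c; rw [Finset.mul_sum]; congr 1; ext i; ring
  rw [Finset.sum_congr rfl fun c _ => this c]
  simp [evec_complete, mul_ite, Finset.sum_ite_eq]

lemma orthonormal_phat :
    Orthonormal ℝ (fun i : {i : Fin n // ev W i ≠ 0} =>
      (WithLp.equiv 2 (Fin m → ℝ)).symm (fun a => (Real.sqrt (ev W i))⁻¹ * (W *ᵥ evec W i.1) a)) := by
  rw [orthonormal_iff_ite]
  intro i j
  have hdot := Wevec_dot W i.1 j.1
  have hi : (0:ℝ) < ev W i.1 := lt_of_le_of_ne (ev_nonneg W i.1) (Ne.symm i.2)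
  have hsi : Real.sqrt (ev W i.1) ≠ 0 := by positivity
  have hsj : Real.sqrt (ev W j.1) ≠ 0 := by
    have : (0:ℝ) < ev W j.1 := lt_of_le_of_ne (ev_nonneg W j.1) (Ne.symm j.2)
    positivity
  simp only [PiLp.inner_apply, RCLike.inner_apply, conj_trivial, WithLp.equiv_symm_apply, WithLp.ofLp_toLp]
  by_cases h : i = j
  · subst h
    simp only [if_pos rfl]
    have : ∑ a, (Real.sqrt (ev W i.1))⁻¹ * (W *ᵥ evec W i.1) a
        * ((Real.sqrt (ev W i.1))⁻¹ * (W *ᵥ evec W i.1) a)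
        = ((Real.sqrt (ev W i.1))⁻¹)^2 * ((W *ᵥ evec W i.1) ⬝ᵥ (W *ᵥ evec W i.1)) := by
      rw [dotProduct, Finset.mul_sum]; congr 1; ext a; ring
    rw [this, hdot]
    simp only [if_pos rfl]
    rw [inv_pow, Real.sq_sqrt (ev_nonneg W i.1)]
    field_simp
    simp
  · have hij : i.1 ≠ j.1 := fun hc => h (Subtype.ext hc)
    simp only [if_neg h]
    refine Eq.trans (Finset.sum_congr rfl fun a _ => mul_comm _ _) ?_
    have : ∑ a, (Real.sqrt (ev W i.1))⁻¹ * (W *ᵥ evec W i.1) a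
        * ((Real.sqrt (ev W j.1))⁻¹ * (W *ᵥ evec W j.1) a)
        = (Real.sqrt (ev W i.1))⁻¹ * (Real.sqrt (ev W j.1))⁻¹
          * ((W *ᵥ evec W i.1) ⬝ᵥ (W *ᵥ evec W j.1)) := by
      rw [dotProduct, Finset.mul_sum]; congr 1; ext a; ring
    rw [this, hdot, if_neg hij, mul_zero]



lemma traceNorm_eq : traceNorm W = ∑ i, Real.sqrt (ev W i) := rfl

lemma traceNorm_nonneg : 0 ≤ traceNorm W := by
  rw [traceNorm_eq]; exact Finset.sum_nonneg fun i _ => Real.sqrt_nonneg _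

lemma frobeniusNorm_sq : frobeniusNorm W ^ 2 = ∑ a, ∑ b, (W a b) ^ 2 := by
  rw [frobeniusNorm, Real.sq_sqrt]
  exact Finset.sum_nonneg fun a _ => Finset.sum_nonneg fun b _ => sq_nonneg _

theorem traceNorm_mul_le {k : ℕ} (U : Matrix (Fin m) (Fin k) ℝ) (V : Matrix (Fin k) (Fin n) ℝ) :
    traceNorm (U * V) ≤ (frobeniusNorm U ^ 2 + frobeniusNorm V ^ 2) / 2 := by
  classical
  set A := U * V with hA
  set q := evec A with hq
  set μ := ev A with hμ
  set σ : Fin n → ℝ := fun i => Real.sqrt (μ i) with hσ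
  -- the subtype of indices with nonzero eigenvalue
  set p : {i : Fin n // μ i ≠ 0} → (Fin m → ℝ) :=
    fun i => fun a => (σ i.1)⁻¹ * (A *ᵥ q i.1) a with hp
  set f : {i : Fin n // μ i ≠ 0} → Fin k → ℝ := fun i => Uᵀ *ᵥ p i with hf
  set g : {i : Fin n // μ i ≠ 0} → Fin k → ℝ := fun i => V *ᵥ q i.1 with hg
  have hσ_nonneg : ∀ i, 0 ≤ σ i := fun i => Real.sqrt_nonneg _
  have hμ_nonneg : ∀ i, 0 ≤ μ i := fun i => ev_nonneg A i
  -- step 1 : trace norm as sum over the subtype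
  have step1 : traceNorm A = ∑ i : {i : Fin n // μ i ≠ 0}, σ i.1 := by
    have hne : ∀ x ∈ (Finset.univ : Finset (Fin n)), Real.sqrt (μ x) ≠ 0 → μ x ≠ 0 :=
      fun x _ hx h0 => hx (by rw [h0, Real.sqrt_zero])
    rw [traceNorm_eq, ← hμ, ← Finset.sum_filter_of_ne hne]
    exact Finset.sum_subtype _ (by simp) _
  -- step 2 : σ i = f i ⬝ᵥ g i for i in the subtype
  have step2 : ∀ i : {i : Fin n // μ i ≠ 0}, σ i.1 = f i ⬝ᵥ g i := by
    intro i
    have hσi : σ i.1 ≠ 0 := by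
      have h0 : 0 < μ i.1 := lt_of_le_of_ne (hμ_nonneg i.1) (Ne.symm i.2)
      show Real.sqrt (μ i.1) ≠ 0
      exact ne_of_gt (Real.sqrt_pos.mpr h0)
    have h1 : f i ⬝ᵥ g i = p i ⬝ᵥ (A *ᵥ q i.1) := by
      show (Uᵀ *ᵥ p i) ⬝ᵥ (V *ᵥ q i.1) = p i ⬝ᵥ (A *ᵥ q i.1)
      rw [Matrix.mulVec_transpose, ← Matrix.dotProduct_mulVec, Matrix.mulVec_mulVec]
    have h2 : p i ⬝ᵥ (A *ᵥ q i.1) = (σ i.1)⁻¹ * ((A *ᵥ q i.1) ⬝ᵥ (A *ᵥ q i.1)) := by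
      rw [dotProduct, dotProduct, Finset.mul_sum]
      congr 1; ext a; simp [hp]; ring
    rw [h1, h2, Wevec_dot, if_pos rfl, ← hμ, ← Real.sq_sqrt (hμ_nonneg i.1)]
    show σ i.1 = (σ i.1)⁻¹ * σ i.1 ^ 2
    field_simp
  -- Cauchy-Schwarz
  have hCS := Finset.sum_mul_sq_le_sq_mul_sq (Finset.univ : Finset ({i : Fin n // μ i ≠ 0} × Fin k))
    (fun x => f x.1 x.2) (fun x => g x.1 x.2)
  rw [Fintype.sum_prod_type, Fintype.sum_prod_type, Fintype.sum_prod_type] at hCS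
  -- Bessel bound for f
  have stepf : ∑ i : {i : Fin n // μ i ≠ 0}, ∑ c, f i c ^ 2 ≤ frobeniusNorm U ^ 2 := by
    calc ∑ i : {i : Fin n // μ i ≠ 0}, ∑ c, f i c ^ 2
        = ∑ c, ∑ i : {i : Fin n // μ i ≠ 0}, f i c ^ 2 := Finset.sum_comm
      _ ≤ ∑ c, ∑ a, (U a c) ^ 2 := ?_
      _ = ∑ a, ∑ c, (U a c) ^ 2 := Finset.sum_comm
      _ = frobeniusNorm U ^ 2 := (frobeniusNorm_sq U).symm
    apply Finset.sum_le_sum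
    intro c _
    have hb := (orthonormal_phat A).sum_inner_products_le
      (x := (WithLp.equiv 2 (Fin m → ℝ)).symm (fun a => U a c)) (s := Finset.univ)
    have hinner : ∀ i : {i : Fin n // μ i ≠ 0},
        (inner ℝ ((WithLp.equiv 2 (Fin m → ℝ)).symm
            (fun a => (Real.sqrt (ev A i))⁻¹ * (A *ᵥ evec A i.1) a))
          ((WithLp.equiv 2 (Fin m → ℝ)).symm (fun a => U a c)) : ℝ) = f i c := by
      intro i
      simp only [PiLp.inner_apply, RCLike.inner_apply, conj_trivial, WithLp.equiv_symm_apply, WithLp.ofLp_toLp]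
      show _ = (Uᵀ *ᵥ p i) c
      simp only [Matrix.mulVec, dotProduct, hp, hσ, hμ, Matrix.transpose_apply]
      congr 1
    have hnorm : ‖(WithLp.equiv 2 (Fin m → ℝ)).symm (fun a => U a c)‖ ^ 2
        = ∑ a, (U a c) ^ 2 := by
      rw [EuclideanSpace.norm_eq, Real.sq_sqrt (Finset.sum_nonneg fun a _ => sq_nonneg _)]
      simp [sq_abs]
    calc ∑ i : {i : Fin n // μ i ≠ 0}, f i c ^ 2
        = ∑ i : {i : Fin n // μ i ≠ 0},
            ‖(inner ℝ ((WithLp.equiv 2 (Fin m → ℝ)).symm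
                (fun a => (Real.sqrt (ev A i))⁻¹ * (A *ᵥ evec A i.1) a))
              ((WithLp.equiv 2 (Fin m → ℝ)).symm (fun a => U a c)) : ℝ)‖ ^ 2 := by
          refine Finset.sum_congr rfl fun i _ => ?_
          rw [hinner i, Real.norm_eq_abs, sq_abs]
      _ ≤ ‖(WithLp.equiv 2 (Fin m → ℝ)).symm (fun a => U a c)‖ ^ 2 := hb
      _ = ∑ a, (U a c) ^ 2 := hnorm
  -- Parseval bound for g
  have stepg : ∑ i : {i : Fin n // μ i ≠ 0}, ∑ c, g i c ^ 2 ≤ frobeniusNorm V ^ 2 := by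
    have hfull : ∀ i : Fin n, ∑ c, ((V *ᵥ q i) c) ^ 2 = ∑ c, ((fun b => V c b) ⬝ᵥ q i) ^ 2 := by
      intro i; rfl
    have h1 : ∑ i : {i : Fin n // μ i ≠ 0}, ∑ c, g i c ^ 2
        ≤ ∑ i : Fin n, ∑ c, ((V *ᵥ q i) c) ^ 2 := by
      rw [← Finset.sum_subtype (Finset.univ.filter fun i => μ i ≠ 0) (by simp)
        (fun i => ∑ c, ((V *ᵥ q i) c) ^ 2)]
      exact Finset.sum_le_sum_of_subset_of_nonneg (Finset.subset_univ _)
        (fun i _ _ => Finset.sum_nonneg fun c _ => sq_nonneg _)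
    have h2 : ∑ i : Fin n, ∑ c, ((V *ᵥ q i) c) ^ 2 = frobeniusNorm V ^ 2 := by
      rw [Finset.sum_comm, frobeniusNorm_sq]
      refine Finset.sum_congr rfl fun c _ => ?_
      have := parseval A (fun b => V c b)
      simp only [dotProduct] at this ⊢
      simp only [Matrix.mulVec, dotProduct]
      rw [this]
      simp [sq]
    calc ∑ i : {i : Fin n // μ i ≠ 0}, ∑ c, g i c ^ 2
        = ∑ i : {i : Fin n // μ i ≠ 0}, ∑ c, ((V *ᵥ q i.1) c) ^ 2 := rfl
      _ ≤ ∑ i : Fin n, ∑ c, ((V *ᵥ q i) c) ^ 2 := h1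
      _ = frobeniusNorm V ^ 2 := h2
  -- combine
  have htr : traceNorm A = ∑ i : {i : Fin n // μ i ≠ 0}, ∑ c, f i c * g i c := by
    rw [step1]
    exact Finset.sum_congr rfl fun i _ => by rw [step2 i]; rfl
  have ht0 : 0 ≤ traceNorm A := traceNorm_nonneg A
  have hFU : (0:ℝ) ≤ ∑ i : {i : Fin n // μ i ≠ 0}, ∑ c, f i c ^ 2 :=
    Finset.sum_nonneg fun i _ => Finset.sum_nonneg fun c _ => sq_nonneg _
  have hGU : (0:ℝ) ≤ ∑ i : {i : Fin n // μ i ≠ 0}, ∑ c, g i c ^ 2 :=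
    Finset.sum_nonneg fun i _ => Finset.sum_nonneg fun c _ => sq_nonneg _
  have hfrU : (0:ℝ) ≤ frobeniusNorm U := Real.sqrt_nonneg _
  have hfrV : (0:ℝ) ≤ frobeniusNorm V := Real.sqrt_nonneg _
  have key : traceNorm A ^ 2 ≤ (frobeniusNorm U ^ 2) * (frobeniusNorm V ^ 2) := by
    rw [htr]
    exact hCS.trans (mul_le_mul stepf stepg hGU (le_trans hFU stepf))
  nlinarith [sq_nonneg (frobeniusNorm U - frobeniusNorm V), sq_nonneg (traceNorm A - frobeniusNorm U * frobeniusNorm V), mul_nonneg hfrU hfrV]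



lemma partialInv_none {α β : Type*} (φ : α → β) {j : β} (h : ¬ ∃ i, φ i = j) :
    Function.partialInv φ j = none := dif_neg h

lemma sum_elim_partialInv {α : Type*} [Fintype α] [DecidableEq α] {k : ℕ} (φ : α ↪ Fin k)
    (G : α → ℝ) : ∑ j, ((Function.partialInv φ j).elim 0 G) = ∑ i, G i := by
  classical
  have h1 : ∑ j ∈ Finset.univ.map φ, ((Function.partialInv φ j).elim 0 G) = ∑ i, G i := by
    rw [Finset.sum_map]
    refine Finset.sum_congr rfl fun i _ => ?_
    rw [Function.partialInv_left φ.injective]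
    rfl
  rw [← h1]
  refine (Finset.sum_subset (Finset.subset_univ _) fun j _ hj => ?_).symm
  have : ¬ ∃ i, φ i = j := by
    intro ⟨i, hi⟩; exact hj (Finset.mem_map.mpr ⟨i, Finset.mem_univ i, hi⟩)
  rw [partialInv_none φ this]
  rfl

lemma sum_subtype_ev {h : Fin n → ℝ} (h0 : ∀ i, ev W i = 0 → h i = 0) :
    ∑ i : {i : Fin n // ev W i ≠ 0}, h i.1 = ∑ i, h i := by
  classical
  rw [← Finset.sum_subtype (Finset.univ.filter fun i => ev W i ≠ 0) (by simp) h]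
  refine Finset.sum_subset (Finset.subset_univ _) fun i _ hi => ?_
  simp only [Finset.mem_filter, Finset.mem_univ, true_and, not_not] at hi
  exact h0 i hi

theorem exists_factorization :
    ∃ (U : Matrix (Fin m) (Fin (min m n)) ℝ) (V : Matrix (Fin (min m n)) (Fin n) ℝ),
      U * V = W ∧ frobeniusNorm U ^ 2 + frobeniusNorm V ^ 2 = 2 * traceNorm W := by
  classical
  have hcard_m : Fintype.card {i : Fin n // ev W i ≠ 0} ≤ m := by
    have h := (orthonormal_phat W).linearIndependent.fintype_card_le_finrank
    simpa [finrank_euclideanSpace] using h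
  have hcard_n : Fintype.card {i : Fin n // ev W i ≠ 0} ≤ n :=
    le_trans (Fintype.card_subtype_le _) (by simp)
  obtain ⟨φ⟩ : Nonempty ({i : Fin n // ev W i ≠ 0} ↪ Fin (min m n)) :=
    Function.Embedding.nonempty_of_card_le (by rw [Fintype.card_fin]; exact Nat.le_min.mpr ⟨hcard_m, hcard_n⟩)
  set s : Fin n → ℝ := fun i => Real.sqrt (Real.sqrt (ev W i)) with hs
  have hs_pos : ∀ i : {i : Fin n // ev W i ≠ 0}, 0 < s i.1 := by
    intro i
    have : 0 < ev W i.1 := lt_of_le_of_ne (ev_nonneg W i.1) (Ne.symm i.2)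
    have : 0 < Real.sqrt (ev W i.1) := Real.sqrt_pos.mpr this
    exact Real.sqrt_pos.mpr this
  have hs_sq : ∀ i : Fin n, s i ^ 2 = Real.sqrt (ev W i) :=
    fun i => Real.sq_sqrt (Real.sqrt_nonneg _)
  have hsqrt_mul : ∀ i : Fin n, Real.sqrt (ev W i) * Real.sqrt (ev W i) = ev W i :=
    fun i => Real.mul_self_sqrt (ev_nonneg W i)
  refine ⟨fun a j => (Function.partialInv φ j).elim 0 fun i => (s i.1)⁻¹ * (W *ᵥ evec W i.1) a,
    fun j b => (Function.partialInv φ j).elim 0 fun i => s i.1 * evec W i.1 b, ?_, ?_⟩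
  · ext a b
    erw [Matrix.mul_apply]
    have hterm : ∀ j, ((Function.partialInv φ j).elim 0 fun i => (s i.1)⁻¹ * (W *ᵥ evec W i.1) a)
        * ((Function.partialInv φ j).elim 0 fun i => s i.1 * evec W i.1 b)
        = (Function.partialInv φ j).elim 0
            fun i => ((s i.1)⁻¹ * (W *ᵥ evec W i.1) a) * (s i.1 * evec W i.1 b) := by
      intro j; cases Function.partialInv φ j <;> simp
    rw [Finset.sum_congr rfl fun j _ => hterm j, sum_elim_partialInv]
    have hterm2 : ∀ i : {i : Fin n // ev W i ≠ 0},
        ((s i.1)⁻¹ * (W *ᵥ evec W i.1) a) * (s i.1 * evec W i.1 b)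
        = (W *ᵥ evec W i.1) a * evec W i.1 b := by
      intro i
      have := (hs_pos i).ne'
      field_simp
    rw [Finset.sum_congr rfl fun i _ => hterm2 i]
    rw [sum_subtype_ev W (h := fun i => (W *ᵥ evec W i) a * evec W i b)
      (fun i h0 => by simp [Wevec_eq_zero W h0])]
    exact sum_pq W a b
  · have hU : frobeniusNorm (fun a j => (Function.partialInv φ j).elim 0
        fun i : {i : Fin n // ev W i ≠ 0} => (s i.1)⁻¹ * (W *ᵥ evec W i.1) a) ^ 2
        = ∑ i : {i : Fin n // ev W i ≠ 0}, Real.sqrt (ev W i.1) := by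
      unfold frobeniusNorm; rw [Real.sq_sqrt (Finset.sum_nonneg fun a _ =>
        Finset.sum_nonneg fun j _ => sq_nonneg _), Finset.sum_comm]
      have hj : ∀ j, ∑ a, ((Function.partialInv φ j).elim 0
          fun i : {i : Fin n // ev W i ≠ 0} => (s i.1)⁻¹ * (W *ᵥ evec W i.1) a) ^ 2
          = (Function.partialInv φ j).elim 0
            fun i : {i : Fin n // ev W i ≠ 0} => ∑ a, ((s i.1)⁻¹ * (W *ᵥ evec W i.1) a) ^ 2 := by
        intro j; cases Function.partialInv φ j <;> simp
      rw [Finset.sum_congr rfl fun j _ => hj j, sum_elim_partialInv]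
      refine Finset.sum_congr rfl fun i _ => ?_
      have hdot : ∑ a, ((s i.1)⁻¹ * (W *ᵥ evec W i.1) a) ^ 2
          = ((s i.1)⁻¹) ^ 2 * ((W *ᵥ evec W i.1) ⬝ᵥ (W *ᵥ evec W i.1)) := by
        rw [dotProduct, Finset.mul_sum]
        exact Finset.sum_congr rfl fun a _ => by ring
      rw [hdot, Wevec_dot, if_pos rfl]
      have h1 := hs_sq i.1
      have h2 := hsqrt_mul i.1
      have h3 := (hs_pos i).ne'
      have h4 : Real.sqrt (ev W i.1) ≠ 0 := by
        rw [← h1]; positivity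
      rw [inv_pow, h1, ← h2]
      field_simp
      rw [Real.sqrt_sq (Real.sqrt_nonneg _)]
    have hV : frobeniusNorm (fun j b => (Function.partialInv φ j).elim 0
        fun i : {i : Fin n // ev W i ≠ 0} => s i.1 * evec W i.1 b) ^ 2
        = ∑ i : {i : Fin n // ev W i ≠ 0}, Real.sqrt (ev W i.1) := by
      unfold frobeniusNorm; rw [Real.sq_sqrt (Finset.sum_nonneg fun a _ =>
        Finset.sum_nonneg fun j _ => sq_nonneg _)]
      have hj : ∀ j, ∑ b, ((Function.partialInv φ j).elim 0
          fun i : {i : Fin n // ev W i ≠ 0} => s i.1 * evec W i.1 b) ^ 2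
          = (Function.partialInv φ j).elim 0
            fun i : {i : Fin n // ev W i ≠ 0} => ∑ b, (s i.1 * evec W i.1 b) ^ 2 := by
        intro j; cases Function.partialInv φ j <;> simp
      rw [Finset.sum_congr rfl fun j _ => hj j, sum_elim_partialInv]
      refine Finset.sum_congr rfl fun i _ => ?_
      have hdot : ∑ b, (s i.1 * evec W i.1 b) ^ 2
          = (s i.1) ^ 2 * (evec W i.1 ⬝ᵥ evec W i.1) := by
        rw [dotProduct, Finset.mul_sum]
        exact Finset.sum_congr rfl fun b _ => by ring
      rw [hdot, evec_orth, if_pos rfl, mul_one, hs_sq]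
    rw [hU, hV]
    have : ∑ i : {i : Fin n // ev W i ≠ 0}, Real.sqrt (ev W i.1) = traceNorm W := by
      rw [traceNorm_eq]
      exact sum_subtype_ev W (h := fun i => Real.sqrt (ev W i)) (fun i h0 => by simp [h0])
    rw [this]; ring

end SVDAux

theorem iInf_factored_loss_eq_iInf_trace_norm_loss {m n : ℕ}
    (ell : Matrix (Fin m) (Fin n) ℝ → ℝ) (hbdd : BddBelow (Set.range ell))
    (lam : ℝ) (hlam : 0 ≤ lam) :
    (⨅ p : Matrix (Fin m) (Fin (min m n)) ℝ × Matrix (Fin (min m n)) (Fin n) ℝ,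
        (ell (p.1 * p.2) +
          lam / 2 * (frobeniusNorm p.1 ^ 2 + frobeniusNorm p.2 ^ 2)))
      = ⨅ W : Matrix (Fin m) (Fin n) ℝ, (ell W + lam * traceNorm W) := by
  classical
  obtain ⟨b, hb⟩ := hbdd
  have hbl : ∀ X, b ≤ ell X := fun X => hb ⟨X, rfl⟩
  have hbddL : BddBelow (Set.range fun p :
      Matrix (Fin m) (Fin (min m n)) ℝ × Matrix (Fin (min m n)) (Fin n) ℝ =>
      ell (p.1 * p.2) + lam / 2 * (frobeniusNorm p.1 ^ 2 + frobeniusNorm p.2 ^ 2)) := by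
    refine ⟨b, ?_⟩
    rintro x ⟨p, rfl⟩
    have h1 := hbl (p.1 * p.2)
    have h2 : (0:ℝ) ≤ frobeniusNorm p.1 ^ 2 := sq_nonneg _
    have h3 : (0:ℝ) ≤ frobeniusNorm p.2 ^ 2 := sq_nonneg _
    nlinarith
  have hbddR : BddBelow (Set.range fun W : Matrix (Fin m) (Fin n) ℝ =>
      ell W + lam * traceNorm W) := by
    refine ⟨b, ?_⟩
    rintro x ⟨Wm, rfl⟩
    have h1 := hbl Wm
    have h2 := mul_nonneg hlam (SVDAux.traceNorm_nonneg Wm)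
    show b ≤ ell Wm + lam * traceNorm Wm
    linarith
  apply le_antisymm
  · refine le_ciInf fun Wm => ?_
    obtain ⟨U, V, hUV, hnorm⟩ := SVDAux.exists_factorization Wm
    have hval : ell (U * V) + lam / 2 * (frobeniusNorm U ^ 2 + frobeniusNorm V ^ 2)
        = ell Wm + lam * traceNorm Wm := by
      rw [hUV, hnorm]; ring
    calc (⨅ p : Matrix (Fin m) (Fin (min m n)) ℝ × Matrix (Fin (min m n)) (Fin n) ℝ,
          (ell (p.1 * p.2) + lam / 2 * (frobeniusNorm p.1 ^ 2 + frobeniusNorm p.2 ^ 2)))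
        ≤ ell ((U, V).1 * (U, V).2)
            + lam / 2 * (frobeniusNorm (U, V).1 ^ 2 + frobeniusNorm (U, V).2 ^ 2) :=
          ciInf_le hbddL (U, V)
      _ = ell Wm + lam * traceNorm Wm := hval
  · refine le_ciInf fun p => ?_
    have h1 : (⨅ W : Matrix (Fin m) (Fin n) ℝ, (ell W + lam * traceNorm W))
        ≤ ell (p.1 * p.2) + lam * traceNorm (p.1 * p.2) := ciInf_le hbddR (p.1 * p.2)
    refine h1.trans ?_
    have h2 := SVDAux.traceNorm_mul_le p.1 p.2
    have h3 := mul_le_mul_of_nonneg_left h2 hlam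
    linarith
end
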